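/- Let 1 ≤ k ≤ n and A ∈ ℂ^{n×n}. Let S = {(p₀,p₁,p₂) ∈ ℝ³ : (p₁,p₂) ≠ (0,0) and −p₀ = λ_k(p₁,p₂) = λ_{n−k+1}(p₁,p₂)} and let V = span_ℝ(S) ⊆ ℝ³. Then for every a + ib ∈ Λ_k(A) and every (t,x,y) ∈ V one has t + ax + by = 0. Consequently, if dim V = 3 then Λ_k(A) = ∅, and if dim V = 2 then Λ_k(A) contains at most one point. -/

import Mathlib

open Matrix

noncomputable section

/-- The Hermitian real part `(A + Aᴴ)/2` of a complex matrix. -/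
def ReM {n : ℕ} (A : Matrix (Fin n) (Fin n) ℂ) : Matrix (Fin n) (Fin n) ℂ :=
  (2⁻¹ : ℂ) • (A + Aᴴ)

/-- The Hermitian imaginary part `(A - Aᴴ)/(2i)` of a complex matrix. -/
def ImM {n : ℕ} (A : Matrix (Fin n) (Fin n) ℂ) : Matrix (Fin n) (Fin n) ℂ :=
  ((2 * Complex.I)⁻¹ : ℂ) • (A - Aᴴ)

/-- The `k`-th largest eigenvalue (for `1 ≤ k ≤ n`) of a Hermitian `n × n` matrix
(with junk value `0` for non-Hermitian input): the eigenvalues sorted in increasing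
order, evaluated at index `n - k`. -/
def kthEig {n : ℕ} (M : Matrix (Fin n) (Fin n) ℂ) (k : ℕ) : ℝ :=
  if hM : M.IsHermitian then
    if h : n - k < n then (hM.eigenvalues ∘ Tuple.sort hM.eigenvalues) ⟨n - k, h⟩ else 0
  else 0

/-- `λ_k(x,y) = λ_k(x·Re A + y·Im A)`. -/
def lamXY {n : ℕ} (A : Matrix (Fin n) (Fin n) ℂ) (k : ℕ) (x y : ℝ) : ℝ :=
  kthEig ((x : ℂ) • ReM A + (y : ℂ) • ImM A) k

/-- `λ_k(θ) = λ_k(cos θ · Re A + sin θ · Im A)`. -/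
def lamTheta {n : ℕ} (A : Matrix (Fin n) (Fin n) ℂ) (k : ℕ) (θ : ℝ) : ℝ :=
  lamXY A k (Real.cos θ) (Real.sin θ)

/-- The rank-`k` numerical range, via the Li–Sze halfplane description:
`Λ_k(A) = {a + ib : a cos θ + b sin θ ≤ λ_k(θ) for all θ}`. -/
def NumRange {n : ℕ} (A : Matrix (Fin n) (Fin n) ℂ) (k : ℕ) : Set ℂ :=
  {z : ℂ | ∀ θ : ℝ, z.re * Real.cos θ + z.im * Real.sin θ ≤ lamTheta A k θ}

/-- The set `S = {(p₀,p₁,p₂) : (p₁,p₂) ≠ (0,0), −p₀ = λ_k(p₁,p₂) = λ_{n−k+1}(p₁,p₂)}`. -/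
def antipodalSet {n : ℕ} (A : Matrix (Fin n) (Fin n) ℂ) (k : ℕ) : Set (Fin 3 → ℝ) :=
  {p | (p 1, p 2) ≠ (0, 0) ∧ -(p 0) = lamXY A k (p 1) (p 2) ∧
    lamXY A k (p 1) (p 2) = lamXY A (n - k + 1) (p 1) (p 2)}

/-! ### Auxiliary lemmas -/

section AuxLemmas

open Polynomial

variable {n : ℕ}

lemma sortComp_eq_of_perm {f g : Fin n → ℝ} (h : (List.ofFn f).Perm (List.ofFn g)) :
    f ∘ Tuple.sort f = g ∘ Tuple.sort g := by
  have h1 : (List.ofFn (f ∘ Tuple.sort f)).Perm (List.ofFn (g ∘ Tuple.sort g)) :=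
    ((Equiv.Perm.ofFn_comp_perm _ f).trans h).trans (Equiv.Perm.ofFn_comp_perm _ g).symm
  exact List.ofFn_injective <| List.Perm.eq_of_sortedLE
    (List.sortedLE_ofFn_iff.2 (Tuple.monotone_sort f))
    (List.sortedLE_ofFn_iff.2 (Tuple.monotone_sort g)) h1

lemma charpoly_unitary_conj (U : Matrix.unitaryGroup (Fin n) ℂ) (D : Matrix (Fin n) (Fin n) ℂ) :
    Matrix.charpoly ((U : Matrix (Fin n) (Fin n) ℂ) * D * star (U : Matrix (Fin n) (Fin n) ℂ))
      = D.charpoly := by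
  set V : Matrix (Fin n) (Fin n) ℂ := (U : Matrix (Fin n) (Fin n) ℂ) with hV
  set W : Matrix (Fin n) (Fin n) ℂ := star V with hW
  have hUU : V * W = 1 := Unitary.mul_star_self_of_mem U.2
  have hone : (C : ℂ →+* ℂ[X]).mapMatrix V * (C : ℂ →+* ℂ[X]).mapMatrix W = 1 := by
    rw [← RingHom.map_mul, hUU, RingHom.map_one]
  have hch : charmatrix (V * D * W) =
      (C : ℂ →+* ℂ[X]).mapMatrix V * charmatrix D * (C : ℂ →+* ℂ[X]).mapMatrix W := by
    rw [charmatrix, charmatrix, mul_sub, sub_mul]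
    congr 1
    · rw [← scalar_commute (X : ℂ[X]) (fun r' => Commute.all _ _) ((C : ℂ →+* ℂ[X]).mapMatrix V),
        mul_assoc, hone, mul_one]
    · rw [← RingHom.map_mul, ← RingHom.map_mul]
  have hone' : (C : ℂ →+* ℂ[X]).mapMatrix W * (C : ℂ →+* ℂ[X]).mapMatrix V = 1 := by
    rw [← RingHom.map_mul, hW, Unitary.star_mul_self_of_mem U.2, RingHom.map_one]
  rw [Matrix.charpoly, Matrix.charpoly, hch, det_mul, det_mul, mul_comm, ← mul_assoc,
    ← det_mul, hone', det_one, one_mul]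

lemma charpoly_diag (d : Fin n → ℂ) :
    (Matrix.diagonal d).charpoly = ∏ i, (X - C (d i)) := by
  rw [Matrix.charpoly_of_upperTriangular _ (Matrix.blockTriangular_diagonal d)]
  simp

lemma charpoly_roots_eig {M : Matrix (Fin n) (Fin n) ℂ} (hM : M.IsHermitian) :
    M.charpoly.roots = (Finset.univ.val.map fun i => (hM.eigenvalues i : ℂ)) := by
  conv_lhs => rw [hM.spectral_theorem, Unitary.conjStarAlgAut_apply]
  rw [charpoly_unitary_conj, charpoly_diag]
  have : ∏ i, (X - C ((RCLike.ofReal ∘ hM.eigenvalues) i)) =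
      ((Finset.univ.val.map fun i => (hM.eigenvalues i : ℂ)).map fun a => X - C a).prod := by
    rw [Multiset.map_map]
    rfl
  rw [this, Polynomial.roots_multiset_prod_X_sub_C]

lemma eig_perm_smul {M : Matrix (Fin n) (Fin n) ℂ} (hM : M.IsHermitian) (c : ℝ)
    (hN : (((c : ℂ)) • M).IsHermitian) :
    (List.ofFn hN.eigenvalues).Perm (List.ofFn fun i => c * hM.eigenvalues i) := by
  have h1 : ((c : ℂ) • M).charpoly.roots =
      (Finset.univ.val.map fun i => (hN.eigenvalues i : ℂ)) := charpoly_roots_eig hN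
  have h2 : (c : ℂ) • M = (hM.eigenvectorUnitary : Matrix (Fin n) (Fin n) ℂ) *
      Matrix.diagonal (fun i => (c : ℂ) * (hM.eigenvalues i : ℂ)) *
      star (hM.eigenvectorUnitary : Matrix (Fin n) (Fin n) ℂ) := by
    conv_lhs => rw [hM.spectral_theorem, Unitary.conjStarAlgAut_apply]
    rw [← smul_mul_assoc, ← mul_smul_comm, ← Matrix.diagonal_smul]
    congr 2
  have h3 : ((c : ℂ) • M).charpoly.roots =
      (Finset.univ.val.map fun i => (c : ℂ) * (hM.eigenvalues i : ℂ)) := by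
    rw [h2, charpoly_unitary_conj, charpoly_diag]
    have : ∏ i, (X - C ((c : ℂ) * (hM.eigenvalues i : ℂ))) =
        ((Finset.univ.val.map fun i => (c : ℂ) * (hM.eigenvalues i : ℂ)).map
          fun a => X - C a).prod := by
      rw [Multiset.map_map]; rfl
    rw [this, Polynomial.roots_multiset_prod_X_sub_C]
  rw [Fin.univ_val_map] at h1 h3
  have hperm : (List.ofFn fun i => (hN.eigenvalues i : ℂ)).Perm
      (List.ofFn fun i => (c : ℂ) * (hM.eigenvalues i : ℂ)) :=
    Multiset.coe_eq_coe.mp (h1.symm.trans h3)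
  have hmap := hperm.map Complex.re
  rw [List.map_ofFn, List.map_ofFn] at hmap
  simpa [Function.comp_def, ← Complex.ofReal_mul] using hmap

lemma isHermitian_smul_real {M : Matrix (Fin n) (Fin n) ℂ} (hM : M.IsHermitian) (c : ℝ) :
    ((c : ℂ) • M).IsHermitian := by
  unfold Matrix.IsHermitian at *
  rw [conjTranspose_smul, hM]
  congr 1
  simp

lemma kthEig_smul {M : Matrix (Fin n) (Fin n) ℂ} (hM : M.IsHermitian) {c : ℝ} (hc : 0 ≤ c)
    (k : ℕ) : kthEig ((c : ℂ) • M) k = c * kthEig M k := by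
  have hN := isHermitian_smul_real hM c
  rw [kthEig, kthEig, dif_pos hN, dif_pos hM]
  by_cases h : n - k < n
  · rw [dif_pos h, dif_pos h]
    have hg : hN.eigenvalues ∘ Tuple.sort hN.eigenvalues =
        (fun i => c * hM.eigenvalues i) ∘ Tuple.sort (fun i => c * hM.eigenvalues i) :=
      sortComp_eq_of_perm (eig_perm_smul hM c hN)
    have hmono : Monotone ((fun i => c * hM.eigenvalues i) ∘ Tuple.sort hM.eigenvalues) :=
      fun a b hab => mul_le_mul_of_nonneg_left (Tuple.monotone_sort hM.eigenvalues hab) hc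
    have h2 : (fun i => c * hM.eigenvalues i) ∘ Tuple.sort hM.eigenvalues =
        (fun i => c * hM.eigenvalues i) ∘ Tuple.sort (fun i => c * hM.eigenvalues i) :=
      Tuple.comp_sort_eq_comp_iff_monotone.mpr hmono
    rw [hg, ← h2]
    rfl
  · rw [dif_neg h, dif_neg h, mul_zero]

lemma kthEig_neg {M : Matrix (Fin n) (Fin n) ℂ} (hM : M.IsHermitian) {k : ℕ}
    (hk1 : 1 ≤ k) (hkn : k ≤ n) : kthEig (-M) k = - kthEig M (n - k + 1) := by
  have e : (((-1 : ℝ) : ℂ)) • M = -M := by push_cast; rw [neg_one_smul]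
  have hN : ((((-1 : ℝ) : ℂ)) • M).IsHermitian := isHermitian_smul_real hM (-1)
  have h : n - k < n := by omega
  have h' : n - (n - k + 1) < n := by omega
  rw [← e, kthEig, kthEig, dif_pos hN, dif_pos hM, dif_pos h, dif_pos h']
  have hg : hN.eigenvalues ∘ Tuple.sort hN.eigenvalues =
      (fun i => (-1 : ℝ) * hM.eigenvalues i) ∘
        Tuple.sort (fun i => (-1 : ℝ) * hM.eigenvalues i) :=
    sortComp_eq_of_perm (eig_perm_smul hM (-1) hN)
  set f := hM.eigenvalues with hf
  set g : Fin n → ℝ := fun i => (-1 : ℝ) * f i with hgdef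
  set σ : Equiv.Perm (Fin n) := (Fin.revPerm).trans (Tuple.sort f) with hσ
  have hmono : Monotone (g ∘ σ) := by
    intro a b hab
    have : Fin.rev b ≤ Fin.rev a := Fin.rev_le_rev.mpr hab
    have h3 := Tuple.monotone_sort f this
    simp only [Function.comp_apply] at h3
    simp only [hgdef, Function.comp_apply, hσ, Equiv.trans_apply, Fin.revPerm_apply]
    linarith
  have h2 : g ∘ σ = g ∘ Tuple.sort g := Tuple.comp_sort_eq_comp_iff_monotone.mpr hmono
  rw [hg, ← h2]
  have hidx : σ ⟨n - k, h⟩ = Tuple.sort f ⟨n - (n - k + 1), h'⟩ := by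
    simp only [hσ, Equiv.trans_apply, Fin.revPerm_apply]
    congr 1
  simp only [Function.comp_apply, hidx, hgdef]
  ring

lemma isHermitian_ReM (A : Matrix (Fin n) (Fin n) ℂ) : (ReM A).IsHermitian := by
  unfold ReM Matrix.IsHermitian
  rw [conjTranspose_smul, conjTranspose_add, conjTranspose_conjTranspose]
  simp [add_comm]

lemma isHermitian_ImM (A : Matrix (Fin n) (Fin n) ℂ) : (ImM A).IsHermitian := by
  unfold ImM Matrix.IsHermitian
  rw [conjTranspose_smul, conjTranspose_sub, conjTranspose_conjTranspose]
  have hs : star ((2 * Complex.I)⁻¹) = -(2 * Complex.I)⁻¹ := by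
    have : (2 * Complex.I)⁻¹ = -Complex.I / 2 := by
      rw [eq_div_iff (two_ne_zero)]
      rw [inv_mul_eq_iff_eq_mul₀ (by simp [Complex.ext_iff] : (2 : ℂ) * Complex.I ≠ 0)]
      simp [Complex.ext_iff]
    rw [this]
    simp [Complex.ext_iff]
    norm_num
  rw [hs, neg_smul, ← smul_neg, neg_sub]

lemma isHermitian_comb (A : Matrix (Fin n) (Fin n) ℂ) (x y : ℝ) :
    ((x : ℂ) • ReM A + (y : ℂ) • ImM A).IsHermitian :=
  (isHermitian_smul_real (isHermitian_ReM A) x).add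
    (isHermitian_smul_real (isHermitian_ImM A) y)

lemma lamXY_smul (A : Matrix (Fin n) (Fin n) ℂ) (k : ℕ) {r : ℝ} (hr : 0 ≤ r) (x y : ℝ) :
    lamXY A k (r * x) (r * y) = r * lamXY A k x y := by
  unfold lamXY
  have : ((r * x : ℝ) : ℂ) • ReM A + ((r * y : ℝ) : ℂ) • ImM A =
      (r : ℂ) • ((x : ℂ) • ReM A + (y : ℂ) • ImM A) := by
    push_cast
    rw [smul_add, smul_smul, smul_smul]
  rw [this, kthEig_smul (isHermitian_comb A x y) hr]

lemma lamXY_negneg (A : Matrix (Fin n) (Fin n) ℂ) {k : ℕ} (hk1 : 1 ≤ k) (hkn : k ≤ n)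
    (x y : ℝ) : lamXY A k (-x) (-y) = - lamXY A (n - k + 1) x y := by
  unfold lamXY
  have : ((-x : ℝ) : ℂ) • ReM A + ((-y : ℝ) : ℂ) • ImM A =
      -((x : ℂ) • ReM A + (y : ℂ) • ImM A) := by
    push_cast
    rw [neg_add, ← neg_smul, ← neg_smul]
  rw [this, kthEig_neg (isHermitian_comb A x y) hk1 hkn]

lemma point_eq {n k : ℕ} (hk1 : 1 ≤ k) (hkn : k ≤ n) (A : Matrix (Fin n) (Fin n) ℂ)
    {z : ℂ} (hz : z ∈ NumRange A k) {p : Fin 3 → ℝ} (hp : p ∈ antipodalSet A k) :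
    p 0 + z.re * p 1 + z.im * p 2 = 0 := by
  obtain ⟨hne, h0, heq⟩ := hp
  set x := p 1 with hxdef
  set y := p 2 with hydef
  set w : ℂ := ⟨x, y⟩ with hwdef
  have hw : w ≠ 0 := by
    intro hw0
    apply hne
    rw [Complex.ext_iff] at hw0
    simp only [hwdef] at hw0
    simp [hw0.1, hw0.2]
  set r := ‖w‖ with hrdef
  have hr : 0 < r := (norm_pos_iff.mpr hw)
  set θ := Complex.arg w with hθdef
  have hcos : Real.cos θ = x / r := by rw [hθdef, Complex.cos_arg hw]
  have hsin : Real.sin θ = y / r := by rw [hθdef, Complex.sin_arg]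
  have hx : x = r * Real.cos θ := by rw [hcos]; field_simp
  have hy : y = r * Real.sin θ := by rw [hsin]; field_simp
  have e1 : lamXY A k x y = r * lamTheta A k θ := by
    rw [lamTheta, ← lamXY_smul A k hr.le, ← hx, ← hy]
  have e2 : lamXY A (n - k + 1) x y =
      r * lamXY A (n - k + 1) (Real.cos θ) (Real.sin θ) := by
    rw [← lamXY_smul A (n - k + 1) hr.le, ← hx, ← hy]
  have e3 : lamTheta A k (θ + Real.pi) =
      - lamXY A (n - k + 1) (Real.cos θ) (Real.sin θ) := by
    rw [lamTheta, Real.cos_add_pi, Real.sin_add_pi, lamXY_negneg A hk1 hkn]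
  have i1 := hz θ
  have i2 := hz (θ + Real.pi)
  rw [e3, Real.cos_add_pi, Real.sin_add_pi] at i2
  have s1 := mul_le_mul_of_nonneg_left i1 hr.le
  have s2 := mul_le_mul_of_nonneg_left i2 hr.le
  have h0e : -(p 0) = r * lamTheta A k θ := by rw [h0, e1]
  have h0e2 : -(p 0) = r * lamXY A (n - k + 1) (Real.cos θ) (Real.sin θ) := by
    rw [h0, heq, e2]
  rw [hx, hy]
  nlinarith [s1, s2, h0e, h0e2]

/-- The linear functional `v ↦ v 0 + a * v 1 + b * v 2` on `Fin 3 → ℝ`. -/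
def phiAB (a b : ℝ) : (Fin 3 → ℝ) →ₗ[ℝ] ℝ :=
  LinearMap.proj 0 + a • LinearMap.proj 1 + b • LinearMap.proj 2

lemma phiAB_apply (a b : ℝ) (v : Fin 3 → ℝ) : phiAB a b v = v 0 + a * v 1 + b * v 2 := by
  simp [phiAB, smul_eq_mul]

lemma span_le_ker {n k : ℕ} (hk1 : 1 ≤ k) (hkn : k ≤ n) (A : Matrix (Fin n) (Fin n) ℂ)
    {z : ℂ} (hz : z ∈ NumRange A k) :
    Submodule.span ℝ (antipodalSet A k) ≤ LinearMap.ker (phiAB z.re z.im) := by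
  rw [Submodule.span_le]
  intro p hp
  simp only [SetLike.mem_coe, LinearMap.mem_ker, phiAB_apply]
  exact point_eq hk1 hkn A hz hp

lemma finrank_ker_le (a b : ℝ) :
    Module.finrank ℝ (LinearMap.ker (phiAB a b)) ≤ 2 := by
  have hrn := LinearMap.finrank_range_add_finrank_ker (phiAB a b)
  rw [Module.finrank_fin_fun] at hrn
  have hr1 : Module.finrank ℝ (LinearMap.range (phiAB a b)) ≠ 0 := by
    intro h0
    rw [Submodule.finrank_eq_zero] at h0
    have hbot := h0
    have h1 : phiAB a b ![1, 0, 0] = 1 := by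
      rw [phiAB_apply]
      simp
    have : phiAB a b ![1, 0, 0] ∈ LinearMap.range (phiAB a b) :=
      LinearMap.mem_range_self _ _
    rw [hbot, Submodule.mem_bot, h1] at this
    exact one_ne_zero this
  omega

end AuxLemmas

/-- Every element of `Λ_k(A)` annihilates (via `t + ax + by`) every
vector of `V = span ℝ S`. Consequently `dim V = 3` forces `Λ_k(A) = ∅` and `dim V = 2`
forces `Λ_k(A)` to have at most one point. -/
theorem stmt13 {n k : ℕ} (hk1 : 1 ≤ k) (hkn : k ≤ n)
    (A : Matrix (Fin n) (Fin n) ℂ) :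
    (∀ z ∈ NumRange A k, ∀ v ∈ Submodule.span ℝ (antipodalSet A k),
      v 0 + z.re * v 1 + z.im * v 2 = 0) ∧
    (Module.finrank ℝ (Submodule.span ℝ (antipodalSet A k)) = 3 → NumRange A k = ∅) ∧
    (Module.finrank ℝ (Submodule.span ℝ (antipodalSet A k)) = 2 →
      (NumRange A k).Subsingleton) := by
  refine ⟨?_, ?_, ?_⟩
  · intro z hz v hv
    have := span_le_ker hk1 hkn A hz hv
    rw [LinearMap.mem_ker, phiAB_apply] at this
    exact this
  · intro hdim
    rw [Set.eq_empty_iff_forall_notMem]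
    intro z hz
    have hle := span_le_ker hk1 hkn A hz
    have := Submodule.finrank_mono hle
    rw [hdim] at this
    have := finrank_ker_le z.re z.im
    omega
  · intro hdim z hz z' hz'
    have hle := span_le_ker hk1 hkn A hz
    have hle' := span_le_ker hk1 hkn A hz'
    have heq : Submodule.span ℝ (antipodalSet A k) = LinearMap.ker (phiAB z.re z.im) :=
      Submodule.eq_of_le_of_finrank_le hle (by rw [hdim]; exact finrank_ker_le z.re z.im)
    have heq' : Submodule.span ℝ (antipodalSet A k) = LinearMap.ker (phiAB z'.re z'.im) :=
      Submodule.eq_of_le_of_finrank_le hle' (by rw [hdim]; exact finrank_ker_le z'.re z'.im)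
    have hkk : LinearMap.ker (phiAB z.re z.im) = LinearMap.ker (phiAB z'.re z'.im) :=
      heq ▸ heq'
    have hre : z.re = z'.re := by
      set u : Fin 3 → ℝ := ![-z.re, 1, 0] with hu
      have h1 : u ∈ LinearMap.ker (phiAB z.re z.im) := by
        rw [LinearMap.mem_ker, phiAB_apply]
        simp [hu]
      rw [hkk, LinearMap.mem_ker, phiAB_apply] at h1
      simp [hu] at h1
      linarith
    have him : z.im = z'.im := by
      set u : Fin 3 → ℝ := ![-z.im, 0, 1] with hu
      have h1 : u ∈ LinearMap.ker (phiAB z.re z.im) := by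
        rw [LinearMap.mem_ker, phiAB_apply]
        simp [hu]
      rw [hkk, LinearMap.mem_ker, phiAB_apply] at h1
      simp [hu] at h1
      linarith
    exact Complex.ext hre him

end
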